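/- Let X be an order-N real tensor with dimensions s₁×⋯×s_N, let G be an order-N tensor with dimensions R₁×⋯×R_N where R_l ≤ s_l for every l, and for each l ∈ {1,…,N} let A^{(l)} ∈ ℝ^{s_l×R_l} have orthonormal columns, with ‖X − G ×₁ A^{(1)} ⋯ ×_N A^{(N)}‖₂ ≤ (1/3)‖X‖₂. Let Y^{(1)} = X ×₂ A^{(2)ᵀ} ⋯ ×_N A^{(N)ᵀ}, and for distinct i, j ∈ {2,…,N} let Y^{(i,j,1)} be X contracted in mode l with A^{(l)ᵀ} for every l ∈ {2,…,N}∖{i,j}. If dA^{(i)} ∈ ℝ^{s_i×R_i} and dA^{(j)} ∈ ℝ^{s_j×R_j} satisfy ‖dA^{(i)}‖₂ ≤ ε and ‖dA^{(j)}‖₂ ≤ ε, then ‖Y^{(i,j,1)} ×_i dA^{(i)ᵀ} ×_j dA^{(j)ᵀ}‖₂ ≤ 5 ε² ‖Y^{(1)}‖₂. This bounds each second-order pairwise-perturbation error term relative to the exact Tucker-ALS contraction, independently of the condition number of X. -/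

import Mathlib

open scoped BigOperators

/-- Euclidean (ℓ²) norm of a vector. -/
noncomputable def vnorm {n : ℕ} (v : Fin n → ℝ) : ℝ := Real.sqrt (∑ i, v i ^ 2)

/-- Frobenius norm: the ℓ² norm of all entries. -/
noncomputable def fnorm {ι : Type*} [Fintype ι] (T : ι → ℝ) : ℝ := Real.sqrt (∑ i, T i ^ 2)

/-- Matrix–vector product. -/
noncomputable def matvec {m n : ℕ} (M : Fin m → Fin n → ℝ) (x : Fin n → ℝ) : Fin m → ℝ :=
  fun i => ∑ j, M i j * x j

/-- Matrix–matrix product. -/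
noncomputable def matmul {m n p : ℕ} (A : Fin m → Fin n → ℝ) (B : Fin n → Fin p → ℝ) :
    Fin m → Fin p → ℝ :=
  fun i j => ∑ k, A i k * B k j

/-- Matrix spectral norm. -/
noncomputable def mnorm {m n : ℕ} (M : Fin m → Fin n → ℝ) : ℝ :=
  sSup {r | ∃ x : Fin n → ℝ, vnorm x = 1 ∧ r = vnorm (matvec M x)}

/-- `I(M)`: the infimum of `‖Mx‖₂` over unit vectors `x`. -/
noncomputable def minf {m n : ℕ} (M : Fin m → Fin n → ℝ) : ℝ :=
  sInf {r | ∃ x : Fin n → ℝ, vnorm x = 1 ∧ r = vnorm (matvec M x)}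

/-- Matrix Frobenius norm. -/
noncomputable def mfro {m n : ℕ} (M : Fin m → Fin n → ℝ) : ℝ :=
  Real.sqrt (∑ i, ∑ j, M i j ^ 2)

/-- The multilinear map `g_T` associated to an order-`(d+1)` tensor `T`;
mode `0` is the output mode, modes `1,…,d` are the input modes. -/
noncomputable def gmap {d : ℕ} {s : Fin (d+1) → ℕ} (T : (∀ i, Fin (s i)) → ℝ)
    (x : ∀ i, Fin (s i) → ℝ) : Fin (s 0) → ℝ :=
  fun i₁ => ∑ j : (∀ i, Fin (s i)),
    if j 0 = i₁ then T j * ∏ k ∈ Finset.univ.erase (0 : Fin (d+1)), x k (j k) else 0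

/-- The inputs `x i`, `i ≠ 0`, are all unit vectors. -/
def unitInputs {d : ℕ} {s : Fin (d+1) → ℕ} (x : ∀ i, Fin (s i) → ℝ) : Prop :=
  ∀ i : Fin (d+1), i ≠ 0 → vnorm (x i) = 1

/-- Tensor spectral norm: supremum of `‖g_T(x₂,…,x_N)‖₂` over unit inputs. -/
noncomputable def tnorm {d : ℕ} {s : Fin (d+1) → ℕ} (T : (∀ i, Fin (s i)) → ℝ) : ℝ :=
  sSup {r | ∃ x : (∀ i, Fin (s i) → ℝ), unitInputs x ∧ r = vnorm (gmap T x)}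

/-- `I(T)`: infimum of `‖g_T(x₂,…,x_N)‖₂` over unit inputs. -/
noncomputable def tinf {d : ℕ} {s : Fin (d+1) → ℕ} (T : (∀ i, Fin (s i)) → ℝ) : ℝ :=
  sInf {r | ∃ x : (∀ i, Fin (s i) → ℝ), unitInputs x ∧ r = vnorm (gmap T x)}

/-- Tensor condition number `κ(T) = ‖T‖₂ / I(T)`. -/
noncomputable def tcond {d : ℕ} {s : Fin (d+1) → ℕ} (T : (∀ i, Fin (s i)) → ℝ) : ℝ :=
  tnorm T / tinf T

/-- Dimensions after replacing the size of mode `n` by `J`. -/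
def repl {d : ℕ} (s : Fin (d+1) → ℕ) (n : Fin (d+1)) (J : ℕ) : Fin (d+1) → ℕ :=
  fun i => if i = n then J else s i

/-- Mode-`n` product `T ×ₙ A` with a matrix `A : Fin J → Fin (s n) → ℝ`:
`(T ×ₙ A)(i₁,…,a,…,i_N) = ∑ₖ T(i₁,…,k,…,i_N) A(a,k)`. -/
noncomputable def modeProd {d : ℕ} {s : Fin (d+1) → ℕ} (T : (∀ i, Fin (s i)) → ℝ)
    (n : Fin (d+1)) {J : ℕ} (A : Fin J → Fin (s n) → ℝ) :
    (∀ i, Fin (repl s n J i)) → ℝ :=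
  fun j => ∑ k : Fin (s n),
    T (fun i => if h : i = n then Fin.cast (congrArg s h.symm) k
        else Fin.cast (show repl s n J i = s i by simp [repl, h]) (j i)) *
      A (Fin.cast (show repl s n J n = J by simp [repl]) (j n)) k

/-- Multilinear transformation of a tensor: `multiProd X B = X ×₁ B₁ ×₂ ⋯ ×_N B_N`. -/
noncomputable def multiProd {d : ℕ} {s R : Fin (d+1) → ℕ}
    (X : (∀ i, Fin (s i)) → ℝ) (B : ∀ l, Fin (R l) → Fin (s l) → ℝ) :
    (∀ l, Fin (R l)) → ℝ :=
  fun j => ∑ k : (∀ l, Fin (s l)), X k * ∏ l, B l (j l) (k l)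

/-- Dimensions of `partialContract`: modes in `E` are kept at size `s l`,
the other modes are contracted down to size `R l`. -/
def keepDims {d : ℕ} (s R : Fin (d+1) → ℕ) (E : Finset (Fin (d+1))) : Fin (d+1) → ℕ :=
  fun l => if l ∈ E then s l else R l

/-- Contract every mode `l ∉ E` of `X` with `(A l)ᵀ`; keep the modes in `E` untouched. -/
noncomputable def partialContract {d : ℕ} {s R : Fin (d+1) → ℕ}
    (X : (∀ i, Fin (s i)) → ℝ) (A : ∀ l, Fin (s l) → Fin (R l) → ℝ)
    (E : Finset (Fin (d+1))) : (∀ l, Fin (keepDims s R E l)) → ℝ :=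
  multiProd X (fun l a b =>
    if h : l ∈ E then
      (if b = Fin.cast (show keepDims s R E l = s l by simp [keepDims, h]) a then (1:ℝ) else 0)
    else A l b (Fin.cast (show keepDims s R E l = R l by simp [keepDims, h]) a))

section basic
variable {n m : ℕ}

lemma vnorm_nonneg (v : Fin n → ℝ) : 0 ≤ vnorm v := Real.sqrt_nonneg _

lemma vnorm_sq (v : Fin n → ℝ) : vnorm v ^ 2 = ∑ i, v i ^ 2 :=
  Real.sq_sqrt (Finset.sum_nonneg fun i _ => sq_nonneg _)

lemma vnorm_smul (c : ℝ) (v : Fin n → ℝ) : vnorm (fun i => c * v i) = |c| * vnorm v := by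
  unfold vnorm
  rw [← Real.sqrt_sq_eq_abs, ← Real.sqrt_mul (sq_nonneg c), Finset.mul_sum]
  congr 1
  exact Finset.sum_congr rfl fun i _ => by ring

lemma eq_zero_of_vnorm_eq_zero {v : Fin n → ℝ} (h : vnorm v = 0) : ∀ i, v i = 0 := by
  intro i
  have h2 : ∑ i, v i ^ 2 = 0 := by
    have := vnorm_sq v; rw [h] at this; linarith
  have := (Finset.sum_eq_zero_iff_of_nonneg (fun i _ => sq_nonneg (v i))).1 h2 i (Finset.mem_univ i)
  exact pow_eq_zero_iff (by norm_num) |>.1 this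

lemma sq_le_sq'' {a b : ℝ} (hb : 0 ≤ b) (h : a ^ 2 ≤ b ^ 2) : a ≤ b := by
  nlinarith [abs_nonneg a, le_abs_self a, sq_abs a]

lemma inner_le_vnorm (v w : Fin n → ℝ) : ∑ i, v i * w i ≤ vnorm v * vnorm w := by
  apply sq_le_sq'' (mul_nonneg (vnorm_nonneg v) (vnorm_nonneg w))
  rw [mul_pow, vnorm_sq, vnorm_sq]
  exact Finset.sum_mul_sq_le_sq_mul_sq _ _ _

lemma vnorm_add_le (v w : Fin n → ℝ) : vnorm (fun i => v i + w i) ≤ vnorm v + vnorm w := by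
  apply sq_le_sq'' (add_nonneg (vnorm_nonneg v) (vnorm_nonneg w))
  rw [vnorm_sq]
  have h := inner_le_vnorm v w
  have : ∑ i, (v i + w i) ^ 2 = (∑ i, v i ^ 2) + 2 * (∑ i, v i * w i) + ∑ i, w i ^ 2 := by
    rw [Finset.mul_sum, ← Finset.sum_add_distrib, ← Finset.sum_add_distrib]
    exact Finset.sum_congr rfl fun i _ => by ring
  rw [this]
  have hv := vnorm_sq v; have hw := vnorm_sq w
  nlinarith

lemma vnorm_neg (v : Fin n → ℝ) : vnorm (fun i => -(v i)) = vnorm v := by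
  unfold vnorm; congr 1
  exact Finset.sum_congr rfl fun i _ => by ring

lemma entry_le_vnorm (v : Fin n → ℝ) (i : Fin n) : |v i| ≤ vnorm v := by
  rw [← Real.sqrt_sq_eq_abs]
  exact Real.sqrt_le_sqrt (Finset.single_le_sum (fun j _ => sq_nonneg (v j)) (Finset.mem_univ i))

lemma vnorm_comp_cast {n m : ℕ} (h : n = m) (v : Fin m → ℝ) :
    vnorm (fun i : Fin n => v (Fin.cast h i)) = vnorm v := by
  subst h; rfl

/-- membership bound: every element of the mnorm set is ≤ something finite. -/
lemma matvec_unit_le (M : Fin m → Fin n → ℝ) {x : Fin n → ℝ} (hx : vnorm x = 1) :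
    vnorm (matvec M x) ≤ Real.sqrt (∑ i, ∑ j, M i j ^ 2) := by
  unfold vnorm matvec
  apply Real.sqrt_le_sqrt
  apply Finset.sum_le_sum
  intro i _
  have hx1 : ∑ j, x j ^ 2 = 1 := by
    have := vnorm_sq x; rw [hx] at this; linarith
  calc (∑ j, M i j * x j) ^ 2 ≤ (∑ j, M i j ^ 2) * ∑ j, x j ^ 2 :=
        Finset.sum_mul_sq_le_sq_mul_sq _ _ _
    _ = ∑ j, M i j ^ 2 := by rw [hx1, mul_one]

lemma mnorm_bddAbove (M : Fin m → Fin n → ℝ) :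
    BddAbove {r | ∃ x : Fin n → ℝ, vnorm x = 1 ∧ r = vnorm (matvec M x)} := by
  refine ⟨Real.sqrt (∑ i, ∑ j, M i j ^ 2), ?_⟩
  rintro r ⟨x, hx, rfl⟩
  exact matvec_unit_le M hx

lemma mnorm_nonneg (M : Fin m → Fin n → ℝ) : 0 ≤ mnorm M :=
  Real.sSup_nonneg fun r ⟨x, _, hr⟩ => hr ▸ vnorm_nonneg _

lemma mnorm_le {M : Fin m → Fin n → ℝ} {c : ℝ} (hc : 0 ≤ c)
    (h : ∀ x : Fin n → ℝ, vnorm x = 1 → vnorm (matvec M x) ≤ c) : mnorm M ≤ c :=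
  Real.sSup_le (fun r ⟨x, hx, hr⟩ => hr ▸ h x hx) hc

lemma vnorm_matvec_le (M : Fin m → Fin n → ℝ) (x : Fin n → ℝ) :
    vnorm (matvec M x) ≤ mnorm M * vnorm x := by
  by_cases hx : vnorm x = 0
  · have : matvec M x = fun _ => 0 := by
      funext i; unfold matvec
      exact Finset.sum_eq_zero fun j _ => by rw [eq_zero_of_vnorm_eq_zero hx j, mul_zero]
    rw [this, hx, mul_zero]
    have : vnorm (fun _ : Fin m => (0:ℝ)) = 0 := by unfold vnorm; simp
    rw [this]
  · have hxpos : 0 < vnorm x := lt_of_le_of_ne (vnorm_nonneg x) (Ne.symm hx)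
    set u : Fin n → ℝ := fun i => (vnorm x)⁻¹ * x i with hu
    have hunorm : vnorm u = 1 := by
      rw [hu, vnorm_smul, abs_of_pos (inv_pos.2 hxpos), inv_mul_cancel₀ hx]
    have hmem : vnorm (matvec M u) ≤ mnorm M :=
      le_csSup (mnorm_bddAbove M) ⟨u, hunorm, rfl⟩
    have hMx : matvec M x = fun i => vnorm x * matvec M u i := by
      funext i; unfold matvec
      rw [Finset.mul_sum]
      congr 1; ext j
      rw [hu]; field_simp
    rw [hMx, vnorm_smul, abs_of_pos hxpos, mul_comm (vnorm x)]
    exact mul_le_mul_of_nonneg_right hmem (le_of_lt hxpos)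

lemma mnorm_transpose_le (M : Fin m → Fin n → ℝ) :
    mnorm (fun j i => M i j) ≤ mnorm M := by
  apply mnorm_le (mnorm_nonneg M)
  intro x hx
  set w := matvec (fun j i => M i j) x with hw
  have key : vnorm w ^ 2 ≤ mnorm M * vnorm w := by
    rw [vnorm_sq]
    have h1 : ∑ k, w k ^ 2 = ∑ i, x i * matvec M w i := by
      have hstep : ∀ k, w k ^ 2 = ∑ i, M i k * x i * w k := by
        intro k
        rw [← Finset.sum_mul, sq]
        congr 1
      calc ∑ k, w k ^ 2 = ∑ k, ∑ i, M i k * x i * w k :=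
            Finset.sum_congr rfl fun k _ => hstep k
        _ = ∑ i, ∑ k, M i k * x i * w k := Finset.sum_comm
        _ = ∑ i, x i * matvec M w i := by
            refine Finset.sum_congr rfl fun i _ => ?_
            unfold matvec
            rw [Finset.mul_sum]
            exact Finset.sum_congr rfl fun k _ => by ring
    rw [h1]
    calc ∑ i, x i * matvec M w i ≤ vnorm x * vnorm (matvec M w) := inner_le_vnorm _ _
      _ = vnorm (matvec M w) := by rw [hx, one_mul]
      _ ≤ mnorm M * vnorm w := vnorm_matvec_le M w
  by_cases hw0 : vnorm w = 0
  · rw [hw0]; exact mnorm_nonneg M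
  · have hwpos : 0 < vnorm w := lt_of_le_of_ne (vnorm_nonneg w) (Ne.symm hw0)
    nlinarith

end basic

section tensorlemmas
open Finset
variable {d : ℕ} {s R : Fin (d+1) → ℕ}

lemma vnorm_zero {n : ℕ} : vnorm (fun _ : Fin n => (0:ℝ)) = 0 := by
  unfold vnorm; simp

lemma gmap_abs_le (T : (∀ i, Fin (s i)) → ℝ) {x : ∀ i, Fin (s i) → ℝ}
    (hx : unitInputs x) (i : Fin (s 0)) : |gmap T x i| ≤ ∑ j : (∀ i, Fin (s i)), |T j| := by
  unfold gmap
  refine le_trans (Finset.abs_sum_le_sum_abs _ _) (Finset.sum_le_sum fun j _ => ?_)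
  by_cases h : j 0 = i
  · rw [if_pos h, abs_mul]
    have hp : |∏ k ∈ Finset.univ.erase (0 : Fin (d+1)), x k (j k)| ≤ 1 := by
      rw [Finset.abs_prod]
      refine Finset.prod_le_one (fun k _ => abs_nonneg _) fun k hk => ?_
      have := entry_le_vnorm (x k) (j k)
      rw [hx k (Finset.mem_erase.1 hk).1] at this
      exact this
    calc |T j| * |∏ k ∈ Finset.univ.erase (0 : Fin (d+1)), x k (j k)| ≤ |T j| * 1 :=
        mul_le_mul_of_nonneg_left hp (abs_nonneg _)
      _ = |T j| := mul_one _
  · rw [if_neg h]; simp [abs_nonneg]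

lemma tnorm_bddAbove (T : (∀ i, Fin (s i)) → ℝ) :
    BddAbove {r | ∃ x : (∀ i, Fin (s i) → ℝ), unitInputs x ∧ r = vnorm (gmap T x)} := by
  refine ⟨Real.sqrt (s 0) * ∑ j : (∀ i, Fin (s i)), |T j|, ?_⟩
  rintro r ⟨x, hx, rfl⟩
  have hC : (0:ℝ) ≤ ∑ j : (∀ i, Fin (s i)), |T j| :=
    Finset.sum_nonneg fun j _ => abs_nonneg _
  have h1 : vnorm (gmap T x) ≤ Real.sqrt ((s 0) * (∑ j : (∀ i, Fin (s i)), |T j|) ^ 2) := by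
    unfold vnorm
    apply Real.sqrt_le_sqrt
    calc ∑ i, gmap T x i ^ 2 ≤ ∑ _i : Fin (s 0), (∑ j : (∀ i, Fin (s i)), |T j|) ^ 2 := by
          refine Finset.sum_le_sum fun i _ => ?_
          have h := gmap_abs_le T hx i
          nlinarith [abs_nonneg (gmap T x i), sq_abs (gmap T x i)]
      _ = (s 0) * (∑ j : (∀ i, Fin (s i)), |T j|) ^ 2 := by
          rw [Finset.sum_const, Finset.card_univ, Fintype.card_fin, nsmul_eq_mul]
  rwa [Real.sqrt_mul (Nat.cast_nonneg _), Real.sqrt_sq hC] at h1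

lemma tnorm_nonneg (T : (∀ i, Fin (s i)) → ℝ) : 0 ≤ tnorm T :=
  Real.sSup_nonneg fun r ⟨x, _, hr⟩ => hr ▸ vnorm_nonneg _

lemma gmap_unit_le (T : (∀ i, Fin (s i)) → ℝ) {x : ∀ i, Fin (s i) → ℝ}
    (hx : unitInputs x) : vnorm (gmap T x) ≤ tnorm T :=
  le_csSup (tnorm_bddAbove T) ⟨x, hx, rfl⟩

lemma tnorm_le {T : (∀ i, Fin (s i)) → ℝ} {c : ℝ} (hc : 0 ≤ c)
    (h : ∀ x : (∀ i, Fin (s i) → ℝ), unitInputs x → vnorm (gmap T x) ≤ c) : tnorm T ≤ c :=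
  Real.sSup_le (fun r ⟨x, hx, hr⟩ => hr ▸ h x hx) hc

lemma gmap_congr (T : (∀ i, Fin (s i)) → ℝ) {x x' : ∀ i, Fin (s i) → ℝ}
    (h : ∀ l : Fin (d+1), l ≠ 0 → x l = x' l) : gmap T x = gmap T x' := by
  funext i
  unfold gmap
  refine Finset.sum_congr rfl fun j _ => ?_
  have : ∏ k ∈ Finset.univ.erase (0 : Fin (d+1)), x k (j k)
      = ∏ k ∈ Finset.univ.erase (0 : Fin (d+1)), x' k (j k) :=
    Finset.prod_congr rfl fun k hk => by rw [h k (Finset.mem_erase.1 hk).1]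
  rw [this]

/-- Multilinear bound: `‖g_T(y)‖ ≤ ‖T‖ ∏ ‖y l‖`. -/
lemma gmap_bound (T : (∀ i, Fin (s i)) → ℝ) (y : ∀ i, Fin (s i) → ℝ) :
    vnorm (gmap T y) ≤ tnorm T * ∏ l ∈ Finset.univ.erase (0 : Fin (d+1)), vnorm (y l) := by
  by_cases hz : ∃ l ∈ Finset.univ.erase (0 : Fin (d+1)), vnorm (y l) = 0
  · obtain ⟨l, hl, hl0⟩ := hz
    have hg : gmap T y = fun _ => 0 := by
      funext i
      unfold gmap
      refine Finset.sum_eq_zero fun j _ => ?_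
      have : ∏ k ∈ Finset.univ.erase (0 : Fin (d+1)), y k (j k) = 0 :=
        Finset.prod_eq_zero hl (eq_zero_of_vnorm_eq_zero hl0 (j l))
      rw [this, mul_zero]; simp
    rw [hg, vnorm_zero, Finset.prod_eq_zero hl hl0, mul_zero]
  · push_neg at hz
    have hpos : ∀ l ∈ Finset.univ.erase (0 : Fin (d+1)), 0 < vnorm (y l) :=
      fun l hl => lt_of_le_of_ne (vnorm_nonneg _) (Ne.symm (hz l hl))
    set x : ∀ i, Fin (s i) → ℝ :=
      fun l a => (if l = (0 : Fin (d+1)) then 1 else (vnorm (y l))⁻¹) * y l a with hxdef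
    have hxunit : unitInputs x := by
      intro l hl
      have h1 : x l = fun a => (vnorm (y l))⁻¹ * y l a := by
        funext a; rw [hxdef]; simp [hl]
      have h2 : vnorm (y l) ≠ 0 := hz l (Finset.mem_erase.2 ⟨hl, Finset.mem_univ l⟩)
      rw [h1, vnorm_smul, abs_of_pos (inv_pos.2 (lt_of_le_of_ne (vnorm_nonneg _) (Ne.symm h2))),
        inv_mul_cancel₀ h2]
    have hkey : gmap T y = fun i =>
        (∏ l ∈ Finset.univ.erase (0 : Fin (d+1)), vnorm (y l)) * gmap T x i := by
      funext i
      unfold gmap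
      rw [Finset.mul_sum]
      refine Finset.sum_congr rfl fun j _ => ?_
      have hprod : ∏ k ∈ Finset.univ.erase (0 : Fin (d+1)), y k (j k)
          = (∏ l ∈ Finset.univ.erase (0 : Fin (d+1)), vnorm (y l)) *
            ∏ k ∈ Finset.univ.erase (0 : Fin (d+1)), x k (j k) := by
        rw [← Finset.prod_mul_distrib]
        refine Finset.prod_congr rfl fun k hk => ?_
        have hk0 : k ≠ 0 := (Finset.mem_erase.1 hk).1
        have h2 : vnorm (y k) ≠ 0 := hz k hk
        rw [hxdef]; simp only [if_neg hk0]
        field_simp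
      by_cases h : j 0 = i
      · rw [if_pos h, if_pos h, hprod]; ring
      · rw [if_neg h, if_neg h, mul_zero]
    rw [hkey]
    have hPnn : 0 ≤ ∏ l ∈ Finset.univ.erase (0 : Fin (d+1)), vnorm (y l) :=
      Finset.prod_nonneg fun l _ => vnorm_nonneg _
    rw [vnorm_smul, abs_of_nonneg hPnn, mul_comm (tnorm T)]
    exact mul_le_mul_of_nonneg_left (gmap_unit_le T hxunit) hPnn

lemma gmap_add (S T : (∀ i, Fin (s i)) → ℝ) (x : ∀ i, Fin (s i) → ℝ) :
    gmap (fun k => S k + T k) x = fun i => gmap S x i + gmap T x i := by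
  funext i
  unfold gmap
  rw [← Finset.sum_add_distrib]
  refine Finset.sum_congr rfl fun j _ => ?_
  by_cases h : j 0 = i <;> simp [h] <;> ring

lemma tnorm_add_le (S T : (∀ i, Fin (s i)) → ℝ) :
    tnorm (fun k => S k + T k) ≤ tnorm S + tnorm T := by
  refine tnorm_le (add_nonneg (tnorm_nonneg S) (tnorm_nonneg T)) fun x hx => ?_
  rw [gmap_add]
  calc vnorm (fun i => gmap S x i + gmap T x i) ≤ vnorm (gmap S x) + vnorm (gmap T x) :=
      vnorm_add_le _ _
    _ ≤ tnorm S + tnorm T := add_le_add (gmap_unit_le S hx) (gmap_unit_le T hx)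

lemma tnorm_neg_le (T : (∀ i, Fin (s i)) → ℝ) :
    tnorm (fun k => -(T k)) ≤ tnorm T := by
  refine tnorm_le (tnorm_nonneg T) fun x hx => ?_
  have : gmap (fun k => -(T k)) x = fun i => -(gmap T x i) := by
    funext i
    unfold gmap
    rw [← Finset.sum_neg_distrib]
    refine Finset.sum_congr rfl fun j _ => ?_
    by_cases h : j 0 = i <;> simp [h]
  rw [this, vnorm_neg]
  exact gmap_unit_le T hx

end tensorlemmas

section master
open Finset
variable {d : ℕ} {s R : Fin (d+1) → ℕ}

/-- Master identity: `g_{X ×ₗ Bₗ}(x) = B₀ · g_X(Bᵀx)`. -/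
lemma gmap_multiProd (X : (∀ l, Fin (s l)) → ℝ) (B : ∀ l, Fin (R l) → Fin (s l) → ℝ)
    (x : ∀ l, Fin (R l) → ℝ) :
    gmap (multiProd X B) x =
      matvec (B 0) (gmap X (fun l c => ∑ b, B l b c * x l b)) := by
  funext i
  set u : ∀ l, Fin (s l) → ℝ := fun l c => ∑ b, B l b c * x l b with hu
  set F : (∀ l, Fin (s l)) → ∀ l : Fin (d+1), Fin (R l) → ℝ :=
    fun k l b => B l b (k l) *
      (if h : l = 0 then (if b = Fin.cast (congrArg R h.symm) i then 1 else 0) else x l b)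
    with hF
  have claim1 : ∀ (j : ∀ l, Fin (R l)) (k : ∀ l, Fin (s l)),
      (if j 0 = i then (X k * ∏ l, B l (j l) (k l)) *
          ∏ m ∈ Finset.univ.erase (0 : Fin (d+1)), x m (j m) else 0)
        = X k * ∏ l, F k l (j l) := by
    intro j k
    have hsplit : ∏ l, F k l (j l) = (∏ l, B l (j l) (k l)) *
        ∏ l, (if h : l = (0:Fin (d+1)) then
          (if j l = Fin.cast (congrArg R h.symm) i then 1 else 0) else x l (j l)) := by
      rw [hF, ← Finset.prod_mul_distrib]
    have h0 : (∏ l, (if h : l = (0:Fin (d+1)) then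
          (if j l = Fin.cast (congrArg R h.symm) i then 1 else 0) else x l (j l)))
        = (if j 0 = i then 1 else 0) *
          ∏ m ∈ Finset.univ.erase (0 : Fin (d+1)), x m (j m) := by
      rw [← Finset.mul_prod_erase Finset.univ _ (Finset.mem_univ (0 : Fin (d+1)))]
      refine congrArg₂ (· * ·) ?_ ?_
      · rfl
      · exact Finset.prod_congr rfl fun l hl => dif_neg (Finset.mem_erase.1 hl).1
    rw [hsplit, h0]
    by_cases h : j 0 = i
    · rw [if_pos h, if_pos h]; ring
    · rw [if_neg h, if_neg h]; ring
  have claim2 : ∀ k : (∀ l, Fin (s l)), ∑ b, F k 0 b = B 0 i (k 0) := by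
    intro k
    have : ∀ b : Fin (R 0), F k 0 b = if b = i then B 0 b (k 0) else 0 := by
      intro b
      have e : F k 0 b = B 0 b (k 0) * (if b = i then 1 else 0) := rfl
      rw [e]
      by_cases h : b = i
      · rw [if_pos h, if_pos h, mul_one]
      · rw [if_neg h, if_neg h, mul_zero]
    rw [Finset.sum_congr rfl fun b _ => this b, Finset.sum_ite_eq' Finset.univ i
      (fun b => B 0 b (k 0)), if_pos (Finset.mem_univ i)]
  have claim3 : ∀ (k : (∀ l, Fin (s l))) (l : Fin (d+1)), l ≠ 0 → ∑ b, F k l b = u l (k l) := by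
    intro k l hl
    rw [hu, hF]
    simp only [dif_neg hl]
  have main : gmap (multiProd X B) x i
      = ∑ k : (∀ l, Fin (s l)), X k *
          (B 0 i (k 0) * ∏ l ∈ Finset.univ.erase (0 : Fin (d+1)), u l (k l)) := by
    unfold gmap multiProd
    calc ∑ j : (∀ l, Fin (R l)), (if j 0 = i then
            (∑ k : (∀ l, Fin (s l)), X k * ∏ l, B l (j l) (k l)) *
              ∏ m ∈ Finset.univ.erase (0 : Fin (d+1)), x m (j m) else 0)
        = ∑ j : (∀ l, Fin (R l)), ∑ k : (∀ l, Fin (s l)),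
            (if j 0 = i then (X k * ∏ l, B l (j l) (k l)) *
              ∏ m ∈ Finset.univ.erase (0 : Fin (d+1)), x m (j m) else 0) := by
          refine Finset.sum_congr rfl fun j _ => ?_
          by_cases h : j 0 = i
          · rw [if_pos h, Finset.sum_mul]
            exact Finset.sum_congr rfl fun k _ => by rw [if_pos h]
          · rw [if_neg h]
            exact (Finset.sum_eq_zero fun k _ => by rw [if_neg h]).symm
      _ = ∑ k : (∀ l, Fin (s l)), ∑ j : (∀ l, Fin (R l)), X k * ∏ l, F k l (j l) := by
          rw [Finset.sum_comm]
          exact Finset.sum_congr rfl fun k _ => Finset.sum_congr rfl fun j _ => claim1 j k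
      _ = ∑ k : (∀ l, Fin (s l)), X k * ∏ l, (∑ b, F k l b) := by
          refine Finset.sum_congr rfl fun k _ => ?_
          rw [← Finset.mul_sum]
          congr 1
          rw [Finset.prod_univ_sum (fun _ => Finset.univ) (F k), Fintype.piFinset_univ]
      _ = ∑ k : (∀ l, Fin (s l)), X k *
            (B 0 i (k 0) * ∏ l ∈ Finset.univ.erase (0 : Fin (d+1)), u l (k l)) := by
          refine Finset.sum_congr rfl fun k _ => ?_
          congr 1
          rw [← Finset.mul_prod_erase Finset.univ (fun l => ∑ b, F k l b)
            (Finset.mem_univ (0 : Fin (d+1))), claim2 k]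
          congr 1
          exact Finset.prod_congr rfl fun l hl => claim3 k l (Finset.mem_erase.1 hl).1
  rw [main]
  unfold matvec gmap
  symm
  calc ∑ c, B 0 i c * ∑ k : (∀ l, Fin (s l)), (if k 0 = c then
          X k * ∏ l ∈ Finset.univ.erase (0 : Fin (d+1)), u l (k l) else 0)
      = ∑ c, ∑ k : (∀ l, Fin (s l)), (if k 0 = c then
          B 0 i c * (X k * ∏ l ∈ Finset.univ.erase (0 : Fin (d+1)), u l (k l)) else 0) := by
        refine Finset.sum_congr rfl fun c _ => ?_
        rw [Finset.mul_sum]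
        refine Finset.sum_congr rfl fun k _ => ?_
        by_cases h : k 0 = c <;> simp [h]
    _ = ∑ k : (∀ l, Fin (s l)), ∑ c, (if k 0 = c then
          B 0 i c * (X k * ∏ l ∈ Finset.univ.erase (0 : Fin (d+1)), u l (k l)) else 0) :=
        Finset.sum_comm
    _ = ∑ k : (∀ l, Fin (s l)), X k *
          (B 0 i (k 0) * ∏ l ∈ Finset.univ.erase (0 : Fin (d+1)), u l (k l)) := by
        refine Finset.sum_congr rfl fun k _ => ?_
        rw [Finset.sum_ite_eq Finset.univ (k 0) _, if_pos (Finset.mem_univ (k 0))]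
        ring
end master

section orth
variable {m n : ℕ}

lemma orth_vnorm_matvec {A : Fin m → Fin n → ℝ}
    (hA : ∀ k k' : Fin n, ∑ i, A i k * A i k' = if k = k' then (1:ℝ) else 0)
    (v : Fin n → ℝ) : vnorm (matvec A v) = vnorm v := by
  unfold vnorm matvec
  congr 1
  calc ∑ i, (∑ k, A i k * v k) ^ 2
      = ∑ i, ∑ k, ∑ k', (A i k * v k) * (A i k' * v k') := by
        refine Finset.sum_congr rfl fun i _ => ?_
        rw [sq, Finset.sum_mul_sum]
    _ = ∑ k, ∑ k', ∑ i, (A i k * v k) * (A i k' * v k') := by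
        rw [Finset.sum_comm]
        exact Finset.sum_congr rfl fun k _ => Finset.sum_comm
    _ = ∑ k, ∑ k', (∑ i, A i k * A i k') * (v k * v k') := by
        refine Finset.sum_congr rfl fun k _ => Finset.sum_congr rfl fun k' _ => ?_
        rw [Finset.sum_mul]
        exact Finset.sum_congr rfl fun i _ => by ring
    _ = ∑ k, ∑ k', (if k = k' then v k * v k' else 0) := by
        refine Finset.sum_congr rfl fun k _ => Finset.sum_congr rfl fun k' _ => ?_
        rw [hA k k']
        by_cases h : k = k' <;> simp [h]
    _ = ∑ k, v k ^ 2 := by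
        refine Finset.sum_congr rfl fun k _ => ?_
        rw [Finset.sum_ite_eq Finset.univ k _, if_pos (Finset.mem_univ k), sq]

lemma orth_mnorm_le_one {A : Fin m → Fin n → ℝ}
    (hA : ∀ k k' : Fin n, ∑ i, A i k * A i k' = if k = k' then (1:ℝ) else 0) :
    mnorm A ≤ 1 :=
  mnorm_le zero_le_one fun x hx => by rw [orth_vnorm_matvec hA, hx]

lemma orth_mnorm_transpose_le_one {A : Fin m → Fin n → ℝ}
    (hA : ∀ k k' : Fin n, ∑ i, A i k * A i k' = if k = k' then (1:ℝ) else 0) :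
    mnorm (fun k i => A i k) ≤ 1 :=
  le_trans (mnorm_transpose_le A) (orth_mnorm_le_one hA)

lemma orth_cancel {A : Fin m → Fin n → ℝ}
    (hA : ∀ k k' : Fin n, ∑ i, A i k * A i k' = if k = k' then (1:ℝ) else 0)
    (v : Fin n → ℝ) (c : Fin n) : ∑ b, A b c * matvec A v b = v c := by
  unfold matvec
  calc ∑ b, A b c * ∑ k, A b k * v k = ∑ b, ∑ k, A b c * (A b k * v k) := by
        refine Finset.sum_congr rfl fun b _ => ?_
        rw [Finset.mul_sum]
    _ = ∑ k, ∑ b, A b c * (A b k * v k) := Finset.sum_comm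
    _ = ∑ k, (if c = k then v k else 0) := by
        refine Finset.sum_congr rfl fun k _ => ?_
        have h1 : ∑ b, A b c * (A b k * v k) = (∑ b, A b c * A b k) * v k := by
          rw [Finset.sum_mul]
          exact Finset.sum_congr rfl fun b _ => by ring
        rw [h1, hA c k]
        by_cases h : c = k <;> simp [h]
    _ = v c := by rw [Finset.sum_ite_eq Finset.univ c _, if_pos (Finset.mem_univ c)]

end orth

section pclemmas
variable {d : ℕ} {s R : Fin (d+1) → ℕ}

lemma keepDims_zero : keepDims s R {0} 0 = s 0 := by simp [keepDims]
lemma keepDims_ne {l : Fin (d+1)} (hl : l ≠ 0) : keepDims s R {0} l = R l := by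
  simp [keepDims, hl]

lemma matvec_delta {n m : ℕ} (h : m = n) (w : Fin n → ℝ) (D : Fin m → Fin n → ℝ)
    (hD : ∀ a b, D a b = if b = Fin.cast h a then 1 else 0) :
    matvec D w = fun a => w (Fin.cast h a) := by
  funext a
  unfold matvec
  calc ∑ b, D a b * w b = ∑ b, (if b = Fin.cast h a then w b else 0) := by
        refine Finset.sum_congr rfl fun b _ => ?_
        rw [hD a b]
        by_cases hb : b = Fin.cast h a <;> simp [hb]
    _ = w (Fin.cast h a) := by
        rw [Finset.sum_ite_eq' Finset.univ (Fin.cast h a) w, if_pos (Finset.mem_univ _)]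

/-- `g` of a mode-wise contraction of `X`, explicitly. -/
lemma gmap_pc (X : (∀ l, Fin (s l)) → ℝ) (A : ∀ l, Fin (s l) → Fin (R l) → ℝ)
    (x : ∀ l, Fin (keepDims s R {0} l) → ℝ) :
    gmap (partialContract X A {0}) x = fun a =>
      gmap X (fun l c => ∑ b : Fin (keepDims s R {0} l),
        (if h : l ∈ ({0} : Finset (Fin (d+1))) then
          (if c = Fin.cast (show keepDims s R ({0} : Finset (Fin (d+1))) l = s l by
              simp [keepDims, h]) b then (1:ℝ) else 0)
        else A l c (Fin.cast (show keepDims s R ({0} : Finset (Fin (d+1))) l = R l by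
              simp [keepDims, h]) b)) * x l b)
        (Fin.cast (keepDims_zero (R := R)) a) := by
  unfold partialContract
  rw [gmap_multiProd]
  exact matvec_delta (keepDims_zero (R := R)) _ _
    (fun a b => dif_pos (Finset.mem_singleton_self 0))

end pclemmas

section L1
open Finset
variable {d : ℕ} {s R : Fin (d+1) → ℕ}

/-- Key upper bound: contracting all modes except mode 0 multiplies the spectral
norm by at most the product of the matrix spectral norms. -/
lemma tnorm_pc_le (X : (∀ l, Fin (s l)) → ℝ) (A : ∀ l, Fin (s l) → Fin (R l) → ℝ) :
    tnorm (partialContract X A {0}) ≤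
      tnorm X * ∏ l ∈ Finset.univ.erase (0 : Fin (d+1)), mnorm (A l) := by
  have hnn : (0:ℝ) ≤ tnorm X * ∏ l ∈ Finset.univ.erase (0 : Fin (d+1)), mnorm (A l) :=
    mul_nonneg (tnorm_nonneg X) (Finset.prod_nonneg fun l _ => mnorm_nonneg _)
  refine tnorm_le hnn fun x hx => ?_
  rw [gmap_pc]
  set u : ∀ l, Fin (s l) → ℝ := fun l c => ∑ b : Fin (keepDims s R {0} l),
      (if h : l ∈ ({0} : Finset (Fin (d+1))) then
        (if c = Fin.cast (show keepDims s R ({0} : Finset (Fin (d+1))) l = s l by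
            simp [keepDims, h]) b then (1:ℝ) else 0)
      else A l c (Fin.cast (show keepDims s R ({0} : Finset (Fin (d+1))) l = R l by
            simp [keepDims, h]) b)) * x l b with hudef
  have h1 : vnorm (fun a => gmap X u (Fin.cast (keepDims_zero (R := R)) a))
      = vnorm (gmap X u) := vnorm_comp_cast _ _
  rw [h1]
  have h2 : vnorm (gmap X u) ≤ tnorm X *
      ∏ l ∈ Finset.univ.erase (0 : Fin (d+1)), vnorm (u l) := gmap_bound X u
  refine le_trans h2 (mul_le_mul_of_nonneg_left ?_ (tnorm_nonneg X))
  refine Finset.prod_le_prod (fun l _ => vnorm_nonneg _) fun l hl => ?_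
  have hl0 : l ≠ 0 := (Finset.mem_erase.1 hl).1
  have hlm : l ∉ ({0} : Finset (Fin (d+1))) := by simpa using hl0
  have hul : u l = matvec (A l)
      (fun b' : Fin (R l) => x l (Fin.cast (keepDims_ne (s := s) hl0).symm b')) := by
    funext c
    rw [hudef]
    simp only [dif_neg hlm]
    unfold matvec
    refine Fintype.sum_equiv (finCongr (keepDims_ne (s := s) hl0)) _ _ fun b => ?_
    simp [finCongr]
  rw [hul]
  calc vnorm (matvec (A l) fun b' : Fin (R l) =>
        x l (Fin.cast (keepDims_ne (s := s) hl0).symm b'))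
      ≤ mnorm (A l) * vnorm (fun b' : Fin (R l) =>
          x l (Fin.cast (keepDims_ne (s := s) hl0).symm b')) := vnorm_matvec_le _ _
    _ = mnorm (A l) * vnorm (x l) := by rw [vnorm_comp_cast]
    _ = mnorm (A l) := by rw [hx l hl0, mul_one]
end L1

section I2
open Finset
variable {d : ℕ} {s R : Fin (d+1) → ℕ}

/-- Expansion: the spectral norm of a Tucker-format tensor is at most that of its
full orthonormal contraction. -/
lemma tnorm_multiProd_le_pc (G : (∀ l, Fin (R l)) → ℝ) (A : ∀ l, Fin (s l) → Fin (R l) → ℝ)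
    (hA : ∀ l, ∀ k k' : Fin (R l), ∑ i, A l i k * A l i k' = if k = k' then (1:ℝ) else 0) :
    tnorm (multiProd G A) ≤ tnorm (partialContract (multiProd G A) A {0}) := by
  refine tnorm_le (tnorm_nonneg _) fun x hx => ?_
  set u : ∀ l, Fin (R l) → ℝ := fun l c => ∑ b, A l b c * x l b with hu
  set xt : ∀ l, Fin (keepDims s R {0} l) → ℝ :=
    fun l a => if h : l = 0 then 0 else u l (Fin.cast (keepDims_ne (s := s) h) a) with hxt
  have key : ∀ z : ∀ l, Fin (s l) → ℝ, (∀ l : Fin (d+1), l ≠ 0 → z l = matvec (A l) (u l)) →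
      gmap (multiProd G A) z = gmap (multiProd G A) x := by
    intro z hz
    rw [gmap_multiProd G A z, gmap_multiProd G A x]
    have : gmap G (fun l c => ∑ b, A l b c * z l b)
        = gmap G (fun l c => ∑ b, A l b c * x l b) := by
      refine gmap_congr G fun l hl => ?_
      funext c
      rw [hz l hl]
      exact orth_cancel (hA l) (u l) c
    rw [this]
  have hW : gmap (partialContract (multiProd G A) A {0}) xt
      = fun a => gmap (multiProd G A) x (Fin.cast (keepDims_zero (R := R)) a) := by
    rw [gmap_pc (multiProd G A) A xt]
    funext a
    refine congrFun (key _ ?_) _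
    intro l hl
    have hlm : l ∉ ({0} : Finset (Fin (d+1))) := by simpa using hl
    funext c
    simp only [dif_neg hlm]
    unfold matvec
    refine Fintype.sum_equiv (finCongr (keepDims_ne (s := s) hl)) _ _ fun b => ?_
    rw [hxt]
    simp only [dif_neg hl]
    rfl
  have h1 : vnorm (gmap (multiProd G A) x)
      = vnorm (gmap (partialContract (multiProd G A) A {0}) xt) := by
    rw [hW, vnorm_comp_cast]
  rw [h1]
  refine le_trans (gmap_bound _ xt) ?_
  have h2 : ∏ l ∈ Finset.univ.erase (0 : Fin (d+1)), vnorm (xt l) ≤ 1 := by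
    refine Finset.prod_le_one (fun l _ => vnorm_nonneg _) fun l hl => ?_
    have hl0 : l ≠ 0 := (Finset.mem_erase.1 hl).1
    have hxtl : xt l = fun a => u l (Fin.cast (keepDims_ne (s := s) hl0) a) := by
      funext a; rw [hxt]; simp only [dif_neg hl0]
    rw [hxtl, vnorm_comp_cast]
    have : u l = matvec (fun c b => A l b c) (x l) := by
      funext c; rw [hu]; rfl
    rw [this]
    calc vnorm (matvec (fun c b => A l b c) (x l))
        ≤ mnorm (fun c b => A l b c) * vnorm (x l) := vnorm_matvec_le _ _
      _ ≤ 1 * 1 := by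
          refine mul_le_mul (orth_mnorm_transpose_le_one (hA l)) (le_of_eq (hx l hl0))
            (vnorm_nonneg _) zero_le_one
      _ = 1 := one_mul 1
  calc tnorm (partialContract (multiProd G A) A {0}) *
        ∏ l ∈ Finset.univ.erase (0 : Fin (d+1)), vnorm (xt l)
      ≤ tnorm (partialContract (multiProd G A) A {0}) * 1 :=
        mul_le_mul_of_nonneg_left h2 (tnorm_nonneg _)
    _ = _ := mul_one _
end I2


/-- per-term inequality of Theorem 4.5 of the paper.
Under the hypotheses of the previous statement (orthonormal factors, Tucker residual at most
`(1/3)‖X‖₂`), if `‖dA^{(i)}‖₂ ≤ ε` and `‖dA^{(j)}‖₂ ≤ ε`, then the second-order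
pairwise-perturbation term satisfies
`‖Y^{(i,j,1)} ×ᵢ dA^{(i)ᵀ} ×ⱼ dA^{(j)ᵀ}‖₂ ≤ 5 ε² ‖Y^{(1)}‖₂`.
(The left-hand tensor is `X` contracted with `A l` at every mode `l ∉ {0,i,j}` and with
`dA^{(i)}, dA^{(j)}` at modes `i, j`.) -/
theorem tucker_pp_second_order_term {d : ℕ} {s R : Fin (d+1) → ℕ}
    (X : (∀ l, Fin (s l)) → ℝ) (G : (∀ l, Fin (R l)) → ℝ)
    (A : ∀ l, Fin (s l) → Fin (R l) → ℝ)
    (hR : ∀ l, R l ≤ s l)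
    (hA : ∀ l, ∀ k k' : Fin (R l), ∑ i, A l i k * A l i k' = if k = k' then (1:ℝ) else 0)
    (i j : Fin (d+1)) (hi : i ≠ 0) (hj : j ≠ 0) (hij : i ≠ j)
    (hres : tnorm (fun k => X k - multiProd G A k) ≤ (1/3) * tnorm X)
    (dAi : Fin (s i) → Fin (R i) → ℝ) (dAj : Fin (s j) → Fin (R j) → ℝ)
    (ε : ℝ) (hdAi : mnorm dAi ≤ ε) (hdAj : mnorm dAj ≤ ε) :
    tnorm (partialContract X (Function.update (Function.update A i dAi) j dAj) {0}) ≤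
      5 * ε^2 * tnorm (partialContract X A {0}) := by
  have hε : (0:ℝ) ≤ ε := le_trans (mnorm_nonneg dAi) hdAi
  have tXnn := tnorm_nonneg X
  have tYnn := tnorm_nonneg (partialContract X A {0})
  -- Step A : tnorm X ≤ tnorm (multiProd G A) + tnorm E
  have hXd : X = fun k => multiProd G A k + (X k - multiProd G A k) :=
    funext fun k => by ring
  have hA1 : tnorm X ≤ tnorm (multiProd G A) + tnorm (fun k => X k - multiProd G A k) := by
    calc tnorm X = tnorm (fun k => multiProd G A k + (X k - multiProd G A k)) :=
          congrArg tnorm hXd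
      _ ≤ _ := tnorm_add_le _ _
  -- Step B : expansion identity
  have hA2 : tnorm (multiProd G A) ≤ tnorm (partialContract (multiProd G A) A {0}) :=
    tnorm_multiProd_le_pc G A hA
  -- Step C : linear decomposition of the contraction
  have hC : partialContract (multiProd G A) A {0} = fun a =>
      partialContract X A {0} a +
        -(partialContract (fun k => X k - multiProd G A k) A {0} a) := by
    funext a
    unfold partialContract multiProd
    rw [← Finset.sum_neg_distrib, ← Finset.sum_add_distrib]
    refine Finset.sum_congr rfl fun k _ => ?_
    ring
  have hA3 : tnorm (partialContract (multiProd G A) A {0}) ≤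
      tnorm (partialContract X A {0}) +
        tnorm (partialContract (fun k => X k - multiProd G A k) A {0}) := by
    rw [hC]
    refine le_trans (tnorm_add_le _ _) ?_
    exact add_le_add le_rfl (tnorm_neg_le _)
  -- Step D : contraction of the residual does not increase the norm
  have hA4 : tnorm (partialContract (fun k => X k - multiProd G A k) A {0}) ≤
      tnorm (fun k => X k - multiProd G A k) := by
    refine le_trans (tnorm_pc_le _ A) ?_
    have hp1 : ∏ l ∈ Finset.univ.erase (0 : Fin (d+1)), mnorm (A l) ≤ 1 :=
      Finset.prod_le_one (fun l _ => mnorm_nonneg _) fun l _ => orth_mnorm_le_one (hA l)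
    calc tnorm (fun k => X k - multiProd G A k) *
          ∏ l ∈ Finset.univ.erase (0 : Fin (d+1)), mnorm (A l)
        ≤ tnorm (fun k => X k - multiProd G A k) * 1 :=
          mul_le_mul_of_nonneg_left hp1 (tnorm_nonneg _)
      _ = _ := mul_one _
  have hXY : tnorm X ≤ 3 * tnorm (partialContract X A {0}) := by linarith
  -- upper bound of the perturbed contraction
  have hprod : ∏ l ∈ Finset.univ.erase (0 : Fin (d+1)),
      mnorm (Function.update (Function.update A i dAi) j dAj l) ≤ ε * ε := by
    calc ∏ l ∈ Finset.univ.erase (0 : Fin (d+1)),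
          mnorm (Function.update (Function.update A i dAi) j dAj l)
        ≤ ∏ l ∈ Finset.univ.erase (0 : Fin (d+1)),
            ((if l = i then ε else 1) * (if l = j then ε else 1)) := by
          refine Finset.prod_le_prod (fun l _ => mnorm_nonneg _) fun l _ => ?_
          by_cases hli : l = i
          · subst hli
            rw [if_pos rfl, if_neg hij, mul_one, Function.update_of_ne hij,
              Function.update_self]
            exact hdAi
          · by_cases hlj : l = j
            · subst hlj
              rw [if_neg hli, if_pos rfl, one_mul, Function.update_self]
              exact hdAj
            · rw [if_neg hli, if_neg hlj, mul_one, Function.update_of_ne hlj,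
                Function.update_of_ne hli]
              exact orth_mnorm_le_one (hA l)
      _ = (∏ l ∈ Finset.univ.erase (0 : Fin (d+1)), (if l = i then ε else 1)) *
            ∏ l ∈ Finset.univ.erase (0 : Fin (d+1)), (if l = j then ε else 1) :=
          Finset.prod_mul_distrib
      _ = ε * ε := by
          rw [Finset.prod_ite_eq' (Finset.univ.erase (0 : Fin (d+1))) i (fun _ => ε),
            Finset.prod_ite_eq' (Finset.univ.erase (0 : Fin (d+1))) j (fun _ => ε),
            if_pos (Finset.mem_erase.2 ⟨hi, Finset.mem_univ i⟩),
            if_pos (Finset.mem_erase.2 ⟨hj, Finset.mem_univ j⟩)]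
  have hLHS : tnorm (partialContract X (Function.update (Function.update A i dAi) j dAj) {0})
      ≤ tnorm X * (ε * ε) :=
    le_trans (tnorm_pc_le X _) (mul_le_mul_of_nonneg_left hprod tXnn)
  calc tnorm (partialContract X (Function.update (Function.update A i dAi) j dAj) {0})
      ≤ tnorm X * (ε * ε) := hLHS
    _ ≤ (3 * tnorm (partialContract X A {0})) * (ε * ε) :=
        mul_le_mul_of_nonneg_right hXY (mul_nonneg hε hε)
    _ ≤ 5 * ε^2 * tnorm (partialContract X A {0}) := by nlinarith
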